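/- Let H be an N×N Hermitian complex matrix, x ∈ ℂ^N, and a ∈ ℝ. For i ∈ {1,…,N}, define g(i) = (Hx)_i · e_i and x'(i) = x − a·g(i). Let ψ ∈ ℂ^N be a unit vector with Hψ = λψ (λ ∈ ℝ). Then (1/N) · Σ_{i=1}^N |⟨ψ, x'(i)⟩|² = (1 − 2aλ/N) · |⟨ψ, x⟩|² + (a²/N) · Σ_{i=1}^N |ψ_i|² · |(Hx)_i|². -/

import Mathlib

open scoped InnerProductSpace

/-- `A.mulVec` viewed as acting on `EuclideanSpace`. -/
noncomputable def mulVecE {N : ℕ} (A : Matrix (Fin N) (Fin N) ℂ)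
    (v : EuclideanSpace ℂ (Fin N)) : EuclideanSpace ℂ (Fin N) :=
  WithLp.toLp 2 (A.mulVec v)

/-- The expectation over a uniformly sampled coordinate `i` of
`|⟨ψ, x − a (Hx)_i e_i⟩|²` equals
`(1 − 2aλ/N)·|⟨ψ, x⟩|² + (a²/N)·Σ_i |ψ_i|²·|(Hx)_i|²` for a unit eigenvector `ψ` of the
Hermitian matrix `H` with eigenvalue `λ`. -/
theorem stmt_7 (N : ℕ) (hN : 1 ≤ N)
    (H : Matrix (Fin N) (Fin N) ℂ) (hH : H.IsHermitian)
    (x ψ : EuclideanSpace ℂ (Fin N)) (a lam : ℝ)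
    (hψ : ‖ψ‖ = 1) (heig : mulVecE H ψ = (lam : ℂ) • ψ) :
    (1 / (N : ℝ)) * ∑ i : Fin N,
        ‖⟪ψ, x - (a : ℂ) • (mulVecE H x i • (EuclideanSpace.single i (1 : ℂ)))⟫_ℂ‖ ^ 2
      = (1 - 2 * a * lam / (N : ℝ)) * ‖⟪ψ, x⟫_ℂ‖ ^ 2
        + (a ^ 2 / (N : ℝ)) * ∑ i : Fin N, ‖ψ i‖ ^ 2 * ‖mulVecE H x i‖ ^ 2 := by
  have hNne : (N : ℝ) ≠ 0 := by
    exact_mod_cast (Nat.one_le_iff_ne_zero.mp hN)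
  set c : ℂ := ⟪ψ, x⟫_ℂ with hc
  set t : Fin N → ℂ := fun i => mulVecE H x i * (starRingEnd ℂ) (ψ i) with ht
  -- key eigen-sum identity
  have hcdef : c = ∑ i : Fin N, (starRingEnd ℂ) (ψ i) * x i := by
    rw [hc]; simp [PiLp.inner_apply, mul_comm]
  have hHψ : ∀ j : Fin N, ∑ i : Fin N, (starRingEnd ℂ) (ψ i) * H i j
      = (lam : ℂ) * (starRingEnd ℂ) (ψ j) := by
    intro j
    have hsym : ∀ i, H j i = (starRingEnd ℂ) (H i j) := by
      intro i
      conv_lhs => rw [← hH]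
      rfl
    have h1 : ∑ i : Fin N, H j i * ψ i = (lam : ℂ) * ψ j := by
      have := congrArg (fun v => v j) heig
      simpa [mulVecE, Matrix.mulVec, dotProduct] using this
    calc ∑ i : Fin N, (starRingEnd ℂ) (ψ i) * H i j
        = (starRingEnd ℂ) (∑ i : Fin N, H j i * ψ i) := by
          rw [map_sum]
          refine Finset.sum_congr rfl fun i _ => ?_
          rw [map_mul, hsym i, Complex.conj_conj]
          ring
      _ = (lam : ℂ) * (starRingEnd ℂ) (ψ j) := by
          rw [h1, map_mul, Complex.conj_ofReal]
  have hsum : ∑ i : Fin N, t i = (lam : ℂ) * c := by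
    have hswap : ∑ i : Fin N, t i
        = ∑ j : Fin N, (∑ i : Fin N, (starRingEnd ℂ) (ψ i) * H i j) * x j := by
      simp only [ht, mulVecE, Matrix.mulVec, dotProduct, Finset.sum_mul]
      rw [Finset.sum_comm]
      exact Finset.sum_congr rfl fun j _ => Finset.sum_congr rfl fun i _ => by ring
    rw [hswap, hcdef, Finset.mul_sum]
    exact Finset.sum_congr rfl fun j _ => by rw [hHψ j]; ring
  -- pointwise expansion
  have hpt : ∀ i : Fin N,
      ‖⟪ψ, x - (a : ℂ) • (mulVecE H x i • (EuclideanSpace.single i (1 : ℂ)))⟫_ℂ‖ ^ 2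
        = Complex.normSq c - 2 * a * (c * (starRingEnd ℂ) (t i)).re
          + a ^ 2 * (‖ψ i‖ ^ 2 * ‖mulVecE H x i‖ ^ 2) := by
    intro i
    have hin : ⟪ψ, x - (a : ℂ) • (mulVecE H x i • (EuclideanSpace.single i (1 : ℂ)))⟫_ℂ
        = c - (a : ℂ) * t i := by
      rw [inner_sub_right, inner_smul_right, inner_smul_right,
        EuclideanSpace.inner_single_right]
      ring
    rw [hin, Complex.sq_norm, Complex.normSq_sub]
    have : Complex.normSq ((a : ℂ) * t i) = a ^ 2 * (‖ψ i‖ ^ 2 * ‖mulVecE H x i‖ ^ 2) := by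
      simp [Complex.normSq_mul, ht, Complex.normSq_conj, ← Complex.sq_norm]
      rw [mul_pow, mul_pow, sq_abs]
      ring
    rw [this]
    have : (c * (starRingEnd ℂ) ((a : ℂ) * t i)).re = a * (c * (starRingEnd ℂ) (t i)).re := by
      simp [map_mul, Complex.conj_ofReal, Complex.mul_re, Complex.mul_im]
      ring
    rw [this]; ring
  rw [Finset.sum_congr rfl (fun i _ => hpt i)]
  rw [Finset.sum_add_distrib, Finset.sum_sub_distrib, Finset.sum_const, ← Finset.mul_sum,
    ← Complex.re_sum, ← Finset.mul_sum, ← map_sum, hsum]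
  have hre : (c * (starRingEnd ℂ) ((lam : ℂ) * c)).re = lam * Complex.normSq c := by
    rw [map_mul, Complex.conj_ofReal]
    have h4 : c * ((lam : ℂ) * (starRingEnd ℂ) c) = (lam : ℂ) * (Complex.normSq c : ℂ) := by
      rw [← Complex.mul_conj]; ring
    rw [h4, ← Complex.ofReal_mul, Complex.ofReal_re]
  rw [hre]
  have hS : ∑ i : Fin N, a ^ 2 * (‖ψ i‖ ^ 2 * ‖mulVecE H x i‖ ^ 2)
      = a ^ 2 * ∑ i : Fin N, ‖ψ i‖ ^ 2 * ‖mulVecE H x i‖ ^ 2 := by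
    rw [Finset.mul_sum]
  rw [hS]
  have hnc : ‖c‖ ^ 2 = Complex.normSq c := by
    rw [← Complex.sq_norm]
  rw [hnc]
  simp only [Finset.card_univ, Fintype.card_fin, nsmul_eq_mul]
  field_simp
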